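/- Let $a \in \mathbb{R}$ and $b \in \mathbb{N}$ with $b > a > 1$, and define $f: \mathbb{T} \to \mathbb{C}$ by $f(z) = \sum_{n=1}^{\infty} a^{-n} z^{b^n}$. Then $f$ satisfies the Hölder condition with exponent $\alpha = \log_b a$: there is a constant $C > 0$ such that $|f(z) - f(w)| \le C |z-w|^{\alpha}$ for all $z, w \in \mathbb{T}$. -/

import Mathlib

lemma geo_tsum (a : ℝ) (ha : 1 < a) : ∑' n : ℕ, (a⁻¹) ^ (n+1) = (a-1)⁻¹ := by
  have h0 : (0:ℝ) ≤ a⁻¹ := by positivity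
  have h1 : a⁻¹ < 1 := by rw [inv_lt_one_iff₀]; right; exact ha
  have h2 : a ≠ 0 := by linarith
  calc ∑' n : ℕ, (a⁻¹) ^ (n+1) = ∑' n : ℕ, (a⁻¹) ^ n * a⁻¹ := by
        simp [pow_succ]
    _ = (∑' n : ℕ, (a⁻¹) ^ n) * a⁻¹ := tsum_mul_right
    _ = (1 - a⁻¹)⁻¹ * a⁻¹ := by rw [tsum_geometric_of_lt_one h0 h1]
    _ = (a-1)⁻¹ := by
        field_simp

lemma geo_summable (a : ℝ) (ha : 1 < a) : Summable (fun n : ℕ => (a⁻¹) ^ (n+1)) := by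
  have h1 : a⁻¹ < 1 := by rw [inv_lt_one_iff₀]; right; exact ha
  exact ((summable_geometric_of_lt_one (by positivity) h1).mul_right a⁻¹).congr
    (fun n => (pow_succ a⁻¹ n).symm)

set_option maxHeartbeats 1000000 in
lemma key_sum (a : ℝ) (b : ℕ) (ha : 1 < a) (hb : a < b) (d : ℝ) (hd : 0 ≤ d) :
    ∑' n : ℕ, (a ^ (n+1))⁻¹ * min 2 ((b:ℝ)^(n+1) * d)
      ≤ ((b:ℝ)^2/((b:ℝ)-a) + 2/(a-1)) * d ^ (Real.logb b a) := by
  set α := Real.logb b a with hα_def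
  have hb1 : (1:ℝ) < b := by linarith
  have ha0 : (0:ℝ) < a := by linarith
  have hba : (b:ℝ) ^ α = a := Real.rpow_logb (by linarith) (by linarith) ha0
  have hα : 0 < α := Real.logb_pos hb1 ha
  have hC : 0 < (b:ℝ)^2/((b:ℝ)-a) + 2/(a-1) := by
    have : (0:ℝ) < (b:ℝ)^2/((b:ℝ)-a) := by
      apply div_pos (by nlinarith) (by linarith)
    have : (0:ℝ) < 2/(a-1) := div_pos (by norm_num) (by linarith)
    linarith
  -- summability of the terms
  have hgle : ∀ n : ℕ, (a ^ (n+1))⁻¹ * min 2 ((b:ℝ)^(n+1) * d) ≤ 2 * (a⁻¹)^(n+1) := by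
    intro n
    rw [← inv_pow]
    have : min 2 ((b:ℝ)^(n+1) * d) ≤ 2 := min_le_left _ _
    have h2 : (0:ℝ) ≤ (a⁻¹)^(n+1) := by positivity
    nlinarith
  have hgnn : ∀ n : ℕ, 0 ≤ (a ^ (n+1))⁻¹ * min 2 ((b:ℝ)^(n+1) * d) := by
    intro n
    have : (0:ℝ) ≤ min 2 ((b:ℝ)^(n+1) * d) := le_min (by norm_num) (by positivity)
    positivity
  have hsumg : Summable (fun n : ℕ => (a ^ (n+1))⁻¹ * min 2 ((b:ℝ)^(n+1) * d)) :=
    Summable.of_nonneg_of_le hgnn hgle ((geo_summable a ha).mul_left 2)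
  rcases eq_or_lt_of_le hd with hd0 | hd0
  · -- d = 0
    simp only [← hd0, mul_zero, min_eq_right (by norm_num : (0:ℝ) ≤ 2)]
    rw [Real.zero_rpow hα.ne', mul_zero]
    simp
  rcases le_or_gt 1 d with hd1 | hd1
  · -- d ≥ 1 : crude bound
    have h1 : ∑' n : ℕ, (a ^ (n+1))⁻¹ * min 2 ((b:ℝ)^(n+1) * d) ≤ ∑' n : ℕ, 2 * (a⁻¹)^(n+1) :=
      Summable.tsum_le_tsum hgle hsumg ((geo_summable a ha).mul_left 2)
    have h2 : ∑' n : ℕ, 2 * (a⁻¹)^(n+1) = 2 * (a-1)⁻¹ := by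
      rw [tsum_mul_left, geo_tsum a ha]
    have h3 : (1:ℝ) ≤ d ^ α := Real.one_le_rpow hd1 hα.le
    have h4 : 2 * (a-1)⁻¹ ≤ (2/(a-1)) * d ^ α := by
      rw [div_eq_mul_inv]
      nlinarith [inv_pos.mpr (show (0:ℝ) < a - 1 by linarith)]
    have h5 : (2/(a-1)) * d ^ α ≤ ((b:ℝ)^2/((b:ℝ)-a) + 2/(a-1)) * d ^ α := by
      have : (0:ℝ) ≤ (b:ℝ)^2/((b:ℝ)-a) := by
        apply div_nonneg (by positivity) (by linarith)
      nlinarith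
    linarith
  · -- 0 < d < 1
    set N := ⌈Real.logb b d⁻¹⌉₊ with hN_def
    have hdinv : 1 < d⁻¹ := by rw [lt_inv_comm₀ (by norm_num) hd0]; simpa using hd1
    have hlogpos : 0 < Real.logb b d⁻¹ := Real.logb_pos hb1 hdinv
    have hrw : (b:ℝ) ^ (Real.logb b d⁻¹) = d⁻¹ :=
      Real.rpow_logb (by linarith) (by linarith) (by positivity)
    -- b^N ≥ 1/d
    have h1 : d⁻¹ ≤ (b:ℝ) ^ (N:ℕ) := by
      rw [← Real.rpow_natCast, ← hrw]
      exact Real.rpow_le_rpow_of_exponent_le (le_of_lt hb1) (Nat.le_ceil _)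
    -- b^N ≤ b/d
    have h2 : (b:ℝ) ^ (N:ℕ) ≤ (b:ℝ)/d := by
      rw [← Real.rpow_natCast]
      calc (b:ℝ) ^ (N:ℝ) ≤ (b:ℝ) ^ (Real.logb b d⁻¹ + 1) := by
            apply Real.rpow_le_rpow_of_exponent_le (le_of_lt hb1)
            have := Nat.ceil_lt_add_one hlogpos.le
            exact_mod_cast this.le
        _ = (b:ℝ)/d := by
            rw [Real.rpow_add (by linarith), hrw, Real.rpow_one]
            field_simp
    -- a^{-N} ≤ d^α
    have haN : ((a:ℝ) ^ (N:ℕ))⁻¹ ≤ d ^ α := by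
      have e1 : (a:ℝ) ^ (N:ℕ) = ((b:ℝ)^(N:ℕ) : ℝ) ^ α := by
        rw [← hba, ← Real.rpow_natCast ((b:ℝ)^α) N, ← Real.rpow_natCast (b:ℝ) N,
          ← Real.rpow_mul (by linarith), mul_comm, Real.rpow_mul (by linarith)]
      have e2 : (d⁻¹) ^ α ≤ ((b:ℝ)^(N:ℕ)) ^ α :=
        Real.rpow_le_rpow (by positivity) h1 hα.le
      rw [e1]
      calc (((b:ℝ)^(N:ℕ)) ^ α)⁻¹ ≤ ((d⁻¹) ^ α)⁻¹ := by
            apply inv_anti₀ (by positivity) e2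
        _ = d ^ α := by rw [Real.inv_rpow hd, inv_inv]
    -- split the sum at N
    rw [← Summable.sum_add_tsum_nat_add N hsumg]
    set C1 : ℝ := (b:ℝ)^2/((b:ℝ)-a)
    set C2 : ℝ := 2/(a-1)
    have hdα : 0 ≤ d ^ α := by positivity
    have head : ∑ i ∈ Finset.range N, (a ^ (i+1))⁻¹ * min 2 ((b:ℝ)^(i+1) * d)
        ≤ C1 * d ^ α := by
      set r : ℝ := (b:ℝ)/a with hr_def
      have hr1 : 1 < r := by rw [lt_div_iff₀ ha0]; linarith
      have hr0 : 0 < r := by linarith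
      have step1 : ∑ i ∈ Finset.range N, (a ^ (i+1))⁻¹ * min 2 ((b:ℝ)^(i+1) * d)
          ≤ ∑ i ∈ Finset.range N, r^(i+1) * d := by
        apply Finset.sum_le_sum
        intro i _
        have h3 : min 2 ((b:ℝ)^(i+1) * d) ≤ (b:ℝ)^(i+1) * d := min_le_right _ _
        calc (a ^ (i+1))⁻¹ * min 2 ((b:ℝ)^(i+1) * d)
            ≤ (a ^ (i+1))⁻¹ * ((b:ℝ)^(i+1) * d) := by
              apply mul_le_mul_of_nonneg_left h3 (by positivity)
          _ = r^(i+1) * d := by rw [hr_def, div_pow]; field_simp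
      have step2 : ∑ i ∈ Finset.range N, r^(i+1) ≤ r^(N+1)/(r-1) := by
        have hgeom : (∑ i ∈ Finset.range N, r^i) * (r - 1) = r^N - 1 := geom_sum_mul r N
        have hS : ∑ i ∈ Finset.range N, r^(i+1) = r * ∑ i ∈ Finset.range N, r^i := by
          rw [Finset.mul_sum]
          exact Finset.sum_congr rfl (fun i _ => by ring)
        rw [hS, le_div_iff₀ (by linarith : (0:ℝ) < r - 1)]
        calc r * (∑ i ∈ Finset.range N, r^i) * (r-1) = r * (r^N - 1) := by
              rw [mul_assoc, hgeom]
          _ ≤ r^(N+1) := by rw [pow_succ]; nlinarith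
      have key1 : r^(N+1)/(r-1) * d
          = ((b:ℝ)^(N+1) * d) * (((a:ℝ)^(N:ℕ))⁻¹ * ((b:ℝ)-a)⁻¹) := by
        rw [hr_def, div_pow]
        have hane : a ≠ 0 := ha0.ne'
        have hbane : (b:ℝ) - a ≠ 0 := by linarith
        have hrm1 : (b:ℝ)/a - 1 = ((b:ℝ)-a)/a := by field_simp
        rw [hrm1]
        field_simp
        ring
      have key2 : (b:ℝ)^(N+1) * d ≤ (b:ℝ)^2 := by
        have hbd : (b:ℝ)^(N:ℕ) * d ≤ (b:ℝ) := by
          calc (b:ℝ)^(N:ℕ) * d ≤ ((b:ℝ)/d) * d := by nlinarith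
            _ = (b:ℝ) := by field_simp
        rw [pow_succ]
        nlinarith
      calc ∑ i ∈ Finset.range N, (a ^ (i+1))⁻¹ * min 2 ((b:ℝ)^(i+1) * d)
          ≤ ∑ i ∈ Finset.range N, r^(i+1) * d := step1
        _ = (∑ i ∈ Finset.range N, r^(i+1)) * d := (Finset.sum_mul _ _ _).symm
        _ ≤ r^(N+1)/(r-1) * d := mul_le_mul_of_nonneg_right step2 hd
        _ = ((b:ℝ)^(N+1) * d) * (((a:ℝ)^(N:ℕ))⁻¹ * ((b:ℝ)-a)⁻¹) := key1
        _ ≤ (b:ℝ)^2 * (d ^ α * ((b:ℝ)-a)⁻¹) := by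
            apply mul_le_mul key2
              (mul_le_mul_of_nonneg_right haN (inv_nonneg.mpr (by linarith)))
              (mul_nonneg (inv_nonneg.mpr (pow_nonneg ha0.le N)) (inv_nonneg.mpr (by linarith)))
              (by positivity)
        _ = C1 * d ^ α := by rw [show C1 = (b:ℝ)^2/((b:ℝ)-a) from rfl, div_eq_mul_inv]; ring
    have tail : ∑' i : ℕ, (a ^ ((i+N)+1))⁻¹ * min 2 ((b:ℝ)^((i+N)+1) * d)
        ≤ C2 * d ^ α := by
      have hbound : ∀ i : ℕ, (a ^ ((i+N)+1))⁻¹ * min 2 ((b:ℝ)^((i+N)+1) * d)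
          ≤ 2 * (a⁻¹)^N * (a⁻¹)^(i+1) := by
        intro i
        have e : ((a:ℝ)^((i+N)+1))⁻¹ = (a⁻¹)^N * (a⁻¹)^(i+1) := by
          rw [← inv_pow, show (i+N)+1 = N+(i+1) by omega, pow_add]
        have h3 : min 2 ((b:ℝ)^((i+N)+1) * d) ≤ 2 := min_le_left _ _
        have h4 : (0:ℝ) ≤ ((a:ℝ)^((i+N)+1))⁻¹ := by positivity
        calc (a ^ ((i+N)+1))⁻¹ * min 2 ((b:ℝ)^((i+N)+1) * d)
            ≤ (a ^ ((i+N)+1))⁻¹ * 2 := mul_le_mul_of_nonneg_left h3 h4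
          _ = 2 * (a⁻¹)^N * (a⁻¹)^(i+1) := by rw [e]; ring
      have hsumshift : Summable (fun i : ℕ => (a ^ ((i+N)+1))⁻¹ * min 2 ((b:ℝ)^((i+N)+1) * d)) :=
        (summable_nat_add_iff N).mpr hsumg
      have hsumbd : Summable (fun i : ℕ => 2 * (a⁻¹)^N * (a⁻¹)^(i+1)) :=
        (geo_summable a ha).mul_left _
      have htb : ∑' i : ℕ, 2 * (a⁻¹)^N * (a⁻¹)^(i+1) = 2 * (a⁻¹)^N * (a-1)⁻¹ := by
        rw [tsum_mul_left, geo_tsum a ha]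
      have hfinal : 2 * (a⁻¹)^N * (a-1)⁻¹ ≤ C2 * d ^ α := by
        have e2 : ((a:ℝ)⁻¹)^N = ((a:ℝ)^(N:ℕ))⁻¹ := inv_pow a N
        have h5 : (0:ℝ) ≤ (a-1)⁻¹ := inv_nonneg.mpr (by linarith)
        calc 2 * (a⁻¹)^N * (a-1)⁻¹ ≤ 2 * (d ^ α) * (a-1)⁻¹ := by
              rw [e2]; nlinarith [haN]
          _ = C2 * d ^ α := by rw [show C2 = 2/(a-1) from rfl, div_eq_mul_inv]; ring
      calc ∑' i : ℕ, (a ^ ((i+N)+1))⁻¹ * min 2 ((b:ℝ)^((i+N)+1) * d)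
          ≤ ∑' i : ℕ, 2 * (a⁻¹)^N * (a⁻¹)^(i+1) := Summable.tsum_le_tsum hbound hsumshift hsumbd
        _ ≤ C2 * d ^ α := htb ▸ hfinal
    rw [add_mul]
    exact add_le_add head tail

lemma pow_diff_bound (z w : ℂ) (hz : ‖z‖ = 1) (hw : ‖w‖ = 1) (n : ℕ) :
    ‖z ^ n - w ^ n‖ ≤ n * ‖z - w‖ := by
  induction n with
  | zero => simp
  | succ n ih =>
    have h : z ^ (n+1) - w ^ (n+1) = z ^ n * (z - w) + (z ^ n - w ^ n) * w := by ring
    push_cast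
    rw [h]
    calc ‖z ^ n * (z - w) + (z ^ n - w ^ n) * w‖
        ≤ ‖z^n*(z-w)‖ + ‖(z^n-w^n)*w‖ := norm_add_le _ _
      _ = ‖z-w‖ + ‖z^n - w^n‖ := by
          rw [norm_mul, norm_mul, norm_pow, hz, hw, one_pow, one_mul, mul_one]
      _ ≤ (↑n + 1) * ‖z-w‖ := by linarith

theorem stmt_3 (a : ℝ) (b : ℕ) (ha : 1 < a) (hb : a < (b : ℝ))
    (f : ℂ → ℂ) (hf : ∀ z : ℂ, f z = ∑' n : ℕ, ((a : ℂ) ^ (n + 1))⁻¹ * z ^ (b ^ (n + 1))) :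
    ∃ C > (0:ℝ), ∀ z ∈ Metric.sphere (0:ℂ) 1, ∀ w ∈ Metric.sphere (0:ℂ) 1,
      ‖f z - f w‖ ≤ C * (‖z - w‖) ^ (Real.logb b a) := by
  have ha0 : (0:ℝ) < a := by linarith
  refine ⟨(b:ℝ)^2/((b:ℝ)-a) + 2/(a-1), ?_, ?_⟩
  · have h1 : (0:ℝ) < (b:ℝ)^2/((b:ℝ)-a) := div_pos (by nlinarith) (by linarith)
    have h2 : (0:ℝ) < 2/(a-1) := div_pos (by norm_num) (by linarith)
    linarith
  intro z hz w hw
  rw [Metric.mem_sphere, Complex.dist_eq, sub_zero] at hz hw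
  set d := ‖z - w‖ with hd_def
  have hd : 0 ≤ d := norm_nonneg _
  have hnorm : ∀ (u : ℂ), ‖u‖ = 1 →
      ∀ n : ℕ, ‖((a:ℂ)^(n+1))⁻¹ * u^(b^(n+1))‖ = (a⁻¹)^(n+1) := by
    intro u hu n
    simp [norm_mul, norm_inv, norm_pow, Complex.norm_real, Real.norm_eq_abs,
      abs_of_pos ha0, hu, inv_pow]
  have hsz : Summable fun n : ℕ => ((a:ℂ)^(n+1))⁻¹ * z^(b^(n+1)) :=
    Summable.of_norm (((geo_summable a ha)).congr (fun n => (hnorm z hz n).symm))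
  have hsw : Summable fun n : ℕ => ((a:ℂ)^(n+1))⁻¹ * w^(b^(n+1)) :=
    Summable.of_norm (((geo_summable a ha)).congr (fun n => (hnorm w hw n).symm))
  have hdiff : f z - f w
      = ∑' n : ℕ, (((a:ℂ)^(n+1))⁻¹ * z^(b^(n+1)) - ((a:ℂ)^(n+1))⁻¹ * w^(b^(n+1))) := by
    rw [hf z, hf w, Summable.tsum_sub hsz hsw]
  have hterm : ∀ n : ℕ, ‖((a:ℂ)^(n+1))⁻¹ * z^(b^(n+1)) - ((a:ℂ)^(n+1))⁻¹ * w^(b^(n+1))‖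
      ≤ (a^(n+1))⁻¹ * min 2 ((b:ℝ)^(n+1) * d) := by
    intro n
    rw [← mul_sub, norm_mul]
    have hna : ‖((a:ℂ)^(n+1))⁻¹‖ = (a^(n+1))⁻¹ := by
      simp [norm_inv, norm_pow, Complex.norm_real, Real.norm_eq_abs, abs_of_pos ha0]
    rw [hna]
    apply mul_le_mul_of_nonneg_left _ (by positivity)
    apply le_min
    · calc ‖z^(b^(n+1)) - w^(b^(n+1))‖ ≤ ‖z^(b^(n+1))‖ + ‖w^(b^(n+1))‖ := norm_sub_le _ _
        _ = 2 := by simp [norm_pow, hz, hw]; norm_num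
    · calc ‖z^(b^(n+1)) - w^(b^(n+1))‖ ≤ ((b^(n+1) : ℕ) : ℝ) * d :=
            pow_diff_bound z w hz hw (b^(n+1))
        _ = (b:ℝ)^(n+1) * d := by push_cast; ring
  have hgle : ∀ n : ℕ, (a ^ (n+1))⁻¹ * min 2 ((b:ℝ)^(n+1) * d) ≤ 2 * (a⁻¹)^(n+1) := by
    intro n
    rw [← inv_pow]
    have h3 : min 2 ((b:ℝ)^(n+1) * d) ≤ 2 := min_le_left _ _
    have h2 : (0:ℝ) ≤ (a⁻¹)^(n+1) := by positivity
    nlinarith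
  have hgnn : ∀ n : ℕ, 0 ≤ (a ^ (n+1))⁻¹ * min 2 ((b:ℝ)^(n+1) * d) := by
    intro n
    have hbd : (0:ℝ) ≤ min 2 ((b:ℝ)^(n+1) * d) := le_min (by norm_num) (by positivity)
    positivity
  have hsumg : Summable (fun n : ℕ => (a ^ (n+1))⁻¹ * min 2 ((b:ℝ)^(n+1) * d)) :=
    Summable.of_nonneg_of_le hgnn hgle ((geo_summable a ha).mul_left 2)
  have hsnorm : Summable (fun n : ℕ =>
      ‖((a:ℂ)^(n+1))⁻¹ * z^(b^(n+1)) - ((a:ℂ)^(n+1))⁻¹ * w^(b^(n+1))‖) :=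
    Summable.of_nonneg_of_le (fun n => norm_nonneg _)
      (fun n => le_trans (hterm n) (hgle n)) ((geo_summable a ha).mul_left 2)
  calc ‖f z - f w‖
      = ‖∑' n : ℕ, (((a:ℂ)^(n+1))⁻¹ * z^(b^(n+1)) - ((a:ℂ)^(n+1))⁻¹ * w^(b^(n+1)))‖ := by
        rw [← hdiff]
    _ ≤ ∑' n : ℕ, ‖((a:ℂ)^(n+1))⁻¹ * z^(b^(n+1)) - ((a:ℂ)^(n+1))⁻¹ * w^(b^(n+1))‖ :=
        norm_tsum_le_tsum_norm hsnorm
    _ ≤ ∑' n : ℕ, (a ^ (n+1))⁻¹ * min 2 ((b:ℝ)^(n+1) * d) :=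
        Summable.tsum_le_tsum hterm hsnorm hsumg
    _ ≤ ((b:ℝ)^2/((b:ℝ)-a) + 2/(a-1)) * d ^ (Real.logb b a) := key_sum a b ha hb d hd
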